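/- Let a be a type-C u-symbol. Then a has an odd number of isolated points. Moreover, writing the isolated points as k_0, …, k_{2f}, numbered so that the corresponding entries of a' = i(a) satisfy a'_{k_0} < a'_{k_1} < ⋯ < a'_{k_{2f}}, if the symbol i(a) is special then k_t ≡ t (mod 2) for every t. -/
import Mathlib


open scoped Classical

/-- The map `i` from type-C u-symbols to type-C symbols: the `j`-th entry is
`a j - ⌈j/2⌉`. -/
def mapC (a : ℕ → ℕ) : ℕ → ℕ := fun j => a j - (j + 1) / 2

/-- A type-C u-symbol of rank `n` (with `2m+1` entries, indexed `0,…,2m`). -/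
def IsUSymC (n m : ℕ) (a : ℕ → ℕ) : Prop :=
  1 ≤ a 1 ∧ (∀ i, i + 2 ≤ 2 * m → a i + 2 ≤ a (i + 2)) ∧
    (∑ j ∈ Finset.range (2 * m + 1), a j) = n + 2 * m ^ 2 + m

/-- The symbol `i(a)` is special, i.e. its entries are nondecreasing. -/
def SpecialC (m : ℕ) (a : ℕ → ℕ) : Prop :=
  ∀ i, i + 1 ≤ 2 * m → mapC a i ≤ mapC a (i + 1)

/-- `k` is an isolated point of the u-symbol `a`: the `k`-th entry of `i(a)` differs
from every other entry of `i(a)`. -/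
def IsIsolC (m : ℕ) (a : ℕ → ℕ) (k : ℕ) : Prop :=
  k ≤ 2 * m ∧ ∀ l ≤ 2 * m, l ≠ k → mapC a l ≠ mapC a k

/-- `K 0, …, K (N-1)` enumerates the isolated points of `a`, ordered so that the
corresponding entries of `i(a)` are strictly increasing. -/
def EnumC (m : ℕ) (a : ℕ → ℕ) (N : ℕ) (K : ℕ → ℕ) : Prop :=
  (∀ t, t < N → IsIsolC m a (K t)) ∧
  (∀ j, IsIsolC m a j → ∃ t, t < N ∧ K t = j) ∧
  (∀ s t, s < t → t < N → mapC a (K s) < mapC a (K t))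

section aux
variable {n m : ℕ} {a : ℕ → ℕ}

lemma le_a (ha : IsUSymC n m a) : ∀ i, i ≤ 2 * m → i ≤ a i := by
  intro i
  induction i using Nat.strong_induction_on with
  | _ i ih =>
    match i with
    | 0 => intro _; exact Nat.zero_le _
    | 1 => intro _; exact ha.1
    | (i+2) =>
      intro h
      have h1 := ih i (by omega) (by omega)
      have h2 := ha.2.1 i h
      omega

lemma step2 (ha : IsUSymC n m a) (i : ℕ) (h : i + 2 ≤ 2 * m) :
    mapC a i < mapC a (i + 2) := by
  have h1 := le_a ha i (by omega)
  have h2 := ha.2.1 i h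
  simp only [mapC]
  omega

lemma same_par_aux (ha : IsUSymC n m a) :
    ∀ d i, i + 2 * d + 2 ≤ 2 * m → mapC a i < mapC a (i + 2 * d + 2) := by
  intro d
  induction d with
  | zero => intro i h; simpa using step2 ha i (by omega)
  | succ d ih =>
    intro i h
    have e : i + 2 * (d + 1) + 2 = (i + 2) + 2 * d + 2 := by ring
    rw [e]
    exact lt_trans (step2 ha i (by omega)) (ih (i + 2) (by omega))

lemma parity_lt (ha : IsUSymC n m a) {i j : ℕ} (hij : i < j) (hj : j ≤ 2 * m)
    (hp : i % 2 = j % 2) : mapC a i < mapC a j := by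
  obtain ⟨d, rfl⟩ : ∃ d, j = i + 2 * d + 2 := ⟨(j - i - 2) / 2, by omega⟩
  exact same_par_aux ha d i (by omega)

lemma fiber_le_two (ha : IsUSymC n m a) (v : ℕ) (s : Finset ℕ)
    (hs : ∀ x ∈ s, x ≤ 2 * m ∧ mapC a x = v) : s.card ≤ 2 := by
  by_contra hc
  push_neg at hc
  have hpar : ∀ x ∈ s, ∀ y ∈ s, x ≠ y → x % 2 ≠ y % 2 := by
    intro x hx y hy hne hp
    obtain ⟨hx1, hx2⟩ := hs x hx
    obtain ⟨hy1, hy2⟩ := hs y hy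
    rcases lt_trichotomy x y with h | h | h
    · exact absurd (parity_lt ha h hy1 hp) (by omega)
    · exact hne h
    · exact absurd (parity_lt ha h hx1 hp.symm) (by omega)
  obtain ⟨x, hx⟩ := (Finset.card_pos (s := s)).mp (by omega)
  have h2 : 0 < (s.erase x).card := by
    have := Finset.card_erase_of_mem hx; omega
  obtain ⟨y, hy⟩ := Finset.card_pos.mp h2
  have h3 : 0 < ((s.erase x).erase y).card := by
    have := Finset.card_erase_of_mem hx
    have := Finset.card_erase_of_mem hy; omega
  obtain ⟨z, hz⟩ := Finset.card_pos.mp h3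
  have hzy : z ≠ y := Finset.ne_of_mem_erase hz
  have hzx : z ≠ x := Finset.ne_of_mem_erase (Finset.mem_of_mem_erase hz)
  have hyx : y ≠ x := Finset.ne_of_mem_erase hy
  have hys : y ∈ s := Finset.mem_of_mem_erase hy
  have hzs : z ∈ s := Finset.mem_of_mem_erase (Finset.mem_of_mem_erase hz)
  have p1 := hpar x hx y hys (Ne.symm hyx)
  have p2 := hpar x hx z hzs (Ne.symm hzx)
  have p3 := hpar y hys z hzs (Ne.symm hzy)
  omega

lemma even_T (ha : IsUSymC n m a) (T : Finset ℕ) (hT1 : ∀ j ∈ T, j ≤ 2 * m)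
    (hT2 : ∀ j ∈ T, ∃ l ∈ T, l ≠ j ∧ mapC a l = mapC a j) : Even T.card := by
  have key : T.card = ∑ v ∈ T.image (mapC a),
      (T.filter (fun j => mapC a j = v)).card :=
    Finset.card_eq_sum_card_fiberwise (fun x hx => Finset.mem_image_of_mem _ hx)
  have h2 : ∀ v ∈ T.image (mapC a),
      (T.filter (fun j => mapC a j = v)).card = 2 := by
    intro v hv
    obtain ⟨j, hj, rfl⟩ := Finset.mem_image.mp hv
    obtain ⟨l, hl, hlj, hval⟩ := hT2 j hj
    refine le_antisymm (fiber_le_two ha (mapC a j) _ ?_) ?_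
    · intro x hx
      rw [Finset.mem_filter] at hx
      exact ⟨hT1 x hx.1, hx.2⟩
    · have hsub : ({l, j} : Finset ℕ) ⊆ T.filter (fun j' => mapC a j' = mapC a j) := by
        intro x hx
        rw [Finset.mem_insert, Finset.mem_singleton] at hx
        rcases hx with rfl | rfl
        · exact Finset.mem_filter.mpr ⟨hl, hval⟩
        · exact Finset.mem_filter.mpr ⟨hj, rfl⟩
      calc 2 = ({l, j} : Finset ℕ).card := (Finset.card_pair hlj).symm
        _ ≤ _ := Finset.card_le_card hsub
  rw [key, Finset.sum_congr rfl h2, Finset.sum_const, smul_eq_mul]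
  exact ⟨(T.image (mapC a)).card, by ring⟩

end aux

section aux2
variable {n m : ℕ} {a : ℕ → ℕ}

lemma not_isol (hj : j ≤ 2 * m) (h : ¬ IsIsolC m a j) :
    ∃ l, l ≤ 2 * m ∧ l ≠ j ∧ mapC a l = mapC a j := by
  rw [IsIsolC] at h
  push_neg at h
  obtain ⟨l, hl1, hl2, hl3⟩ := h hj
  exact ⟨l, hl1, hl2, hl3⟩

lemma mono (hsp : SpecialC m a) : ∀ d i, i + d ≤ 2 * m → mapC a i ≤ mapC a (i + d) := by
  intro d
  induction d with
  | zero => intro i _; simp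
  | succ d ih =>
    intro i h
    calc mapC a i ≤ mapC a (i + d) := ih i (by omega)
      _ ≤ mapC a (i + d + 1) := hsp (i + d) (by omega)

lemma mono' (hsp : SpecialC m a) {i j : ℕ} (hij : i ≤ j) (hj : j ≤ 2 * m) :
    mapC a i ≤ mapC a j := by
  obtain ⟨d, rfl⟩ : ∃ d, j = i + d := ⟨j - i, by omega⟩
  exact mono hsp d i hj

end aux2

theorem stmt3 (n m : ℕ) (hn : 1 ≤ n) (hm : 1 ≤ m) (a : ℕ → ℕ)
    (ha : IsUSymC n m a) :
    Odd ((Finset.range (2 * m + 1)).filter (IsIsolC m a)).card ∧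
    (SpecialC m a →
      ∀ N K, EnumC m a N K → ∀ t, t < N → K t % 2 = t % 2) := by
  constructor
  · -- Part 1
    set S := (Finset.range (2 * m + 1)).filter (IsIsolC m a) with hS
    set T := (Finset.range (2 * m + 1)).filter (fun j => ¬ IsIsolC m a j) with hT
    have hST : S.card + T.card = 2 * m + 1 := by
      rw [hS, hT]
      rw [Finset.card_filter_add_card_filter_not, Finset.card_range]
    have hev : Even T.card := by
      apply even_T ha
      · intro j hj
        rw [hT, Finset.mem_filter, Finset.mem_range] at hj
        omega
      · intro j hj
        rw [hT, Finset.mem_filter, Finset.mem_range] at hj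
        obtain ⟨l, hl1, hl2, hl3⟩ := not_isol (by omega) hj.2
        refine ⟨l, ?_, hl2, hl3⟩
        rw [hT, Finset.mem_filter, Finset.mem_range]
        refine ⟨by omega, fun hiso => ?_⟩
        exact hiso.2 j (by omega) (fun h => hl2 h.symm) hl3.symm
    obtain ⟨c, hc⟩ := hev
    rw [Nat.odd_iff]
    omega
  · -- Part 2
    intro hsp N K hK t ht
    obtain ⟨hK1, hK2, hK3⟩ := hK
    have hkiso := hK1 t ht
    have hk2m : K t ≤ 2 * m := hkiso.1
    -- indices increase along K
    have hKlt : ∀ s, s < t → K s < K t := by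
      intro s hs
      have hv := hK3 s t hs ht
      have hs2m : K s ≤ 2 * m := (hK1 s (by omega)).1
      by_contra h
      exact absurd (mono' hsp (by omega : K t ≤ K s) hs2m) (by omega)
    -- isolated points below K t number exactly t
    have hcardI : ((Finset.range (K t)).filter (IsIsolC m a)).card = t := by
      symm
      conv_lhs => rw [← Finset.card_range t]
      apply Finset.card_bij (fun s _ => K s)
      · intro s hs
        rw [Finset.mem_range] at hs
        rw [Finset.mem_filter, Finset.mem_range]
        exact ⟨hKlt s hs, hK1 s (by omega)⟩
      · intro s hs s' hs' h
        rw [Finset.mem_range] at hs hs'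
        rcases lt_trichotomy s s' with h' | h' | h'
        · exact absurd (hK3 s s' h' (by omega)) (by rw [h]; omega)
        · exact h'
        · exact absurd (hK3 s' s h' (by omega)) (by rw [h]; omega)
      · intro j hj
        rw [Finset.mem_filter, Finset.mem_range] at hj
        obtain ⟨s, hsN, hsj⟩ := hK2 j hj.2
        refine ⟨s, Finset.mem_range.mpr ?_, hsj⟩
        by_contra h
        push_neg at h
        rcases eq_or_lt_of_le h with h' | h'
        · subst h'
          rw [hsj] at hj
          exact lt_irrefl j hj.1
        · have := hK3 t s h' hsN
          rw [hsj] at this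
          have := mono' hsp (le_of_lt hj.1) hk2m
          omega
    -- non-isolated points below K t are even in number
    have hevT : Even ((Finset.range (K t)).filter (fun j => ¬ IsIsolC m a j)).card := by
      apply even_T ha
      · intro j hj
        rw [Finset.mem_filter, Finset.mem_range] at hj
        omega
      · intro j hj
        rw [Finset.mem_filter, Finset.mem_range] at hj
        obtain ⟨hjk, hjni⟩ := hj
        have hj2m : j ≤ 2 * m := by omega
        obtain ⟨l, hl1, hl2, hl3⟩ := not_isol hj2m hjni
        have hlk : l ≠ K t := by
          intro h
          rw [h] at hl3
          exact hkiso.2 j hj2m (by omega) hl3.symm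
        have hlltk : l < K t := by
          by_contra h
          push_neg at h
          have h1 : mapC a j ≤ mapC a (K t) := mono' hsp (le_of_lt hjk) hk2m
          have h2 : mapC a (K t) ≤ mapC a l := mono' hsp (by omega) hl1
          have : mapC a j = mapC a (K t) := by omega
          exact hkiso.2 j hj2m (by omega) this
        refine ⟨l, ?_, hl2, hl3⟩
        rw [Finset.mem_filter, Finset.mem_range]
        refine ⟨hlltk, fun hiso => ?_⟩
        exact hiso.2 j hj2m (fun h => hl2 h.symm) hl3.symm
    have hsplit : ((Finset.range (K t)).filter (IsIsolC m a)).card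
        + ((Finset.range (K t)).filter (fun j => ¬ IsIsolC m a j)).card = K t := by
      rw [Finset.card_filter_add_card_filter_not, Finset.card_range]
    obtain ⟨c, hc⟩ := hevT
    omega
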